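/- Let b be a function on ω with 2 ≤ b(n) ≤ ω for every n, and give the space ∏b = ∏_{n∈ω} b(n) the product topology where each factor b(n) (a set of natural numbers, possibly all of ω) is discrete. Then for every ∏b-predictor π, the set {f ∈ ∏b : π predicts f} is meager in ∏b. -/
import Mathlib


/-- For `b` with `2 ≤ b n ≤ ω` (each `b n` realized as a set `S n ⊆ ℕ` which is
either all of `ℕ` or an initial segment `{0, …, m-1}` with `m ≥ 2`), for every
`∏b`-predictor `(D, π)` the set of functions predicted by it is meager in the
product space `∏_n S n` (each factor discrete). -/
theorem stmt2 (S : ℕ → Set ℕ)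
    (hS : ∀ n, S n = Set.univ ∨ ∃ m : ℕ, 2 ≤ m ∧ S n = Set.Iio m)
    (D : Set ℕ) (hD : D.Infinite)
    (π : ∀ n : ℕ, ((k : Fin n) → S k) → S n) :
    IsMeagre {f : ∀ n, S n | {n ∈ D | f n ≠ π n fun k => f k}.Finite} := by
  have hmem : ∀ n, (0 : ℕ) ∈ S n ∧ (1 : ℕ) ∈ S n := by
    intro n
    rcases hS n with h | ⟨m, hm, h⟩
    · simp [h]
    · simp [h]; omega
  set A : ℕ → Set (∀ n, S n) :=
    fun m => {f | ∀ n ∈ D, m ≤ n → f n = π n fun k => f k} with hA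
  have hsub : {f : ∀ n, S n | {n ∈ D | f n ≠ π n fun k => f k}.Finite} ⊆ ⋃ m, A m := by
    intro f hf
    obtain ⟨m, hm⟩ := hf.bddAbove
    refine Set.mem_iUnion.2 ⟨m + 1, fun n hn hmn => ?_⟩
    by_contra h
    have := hm ⟨hn, h⟩
    omega
  refine (isMeagre_iUnion fun m => ?_).mono hsub
  -- each A m is closed
  have hclosed : IsClosed (A m) := by
    have : A m = ⋂ n, ⋂ (_ : n ∈ D ∧ m ≤ n),
        {f : ∀ n, S n | f n = π n fun k => f k} := by
      ext f
      simp only [hA, Set.mem_setOf_eq, Set.mem_iInter]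
      constructor
      · exact fun h n hn => h n hn.1 hn.2
      · exact fun h n hn hmn => h n ⟨hn, hmn⟩
    rw [this]
    refine isClosed_iInter fun n => isClosed_iInter fun _ => ?_
    exact isClosed_eq (continuous_apply n)
      ((continuous_of_discreteTopology).comp (continuous_pi fun k => continuous_apply _))
  -- A m has empty interior
  have hint : interior (A m) = ∅ := by
    by_contra h
    obtain ⟨f, hf⟩ := Set.nonempty_iff_ne_empty.2 h
    have hnhds : A m ∈ nhds f := mem_interior_iff_mem_nhds.1 hf
    rw [nhds_pi, Filter.mem_pi] at hnhds
    obtain ⟨I, hI, t, ht, hsub'⟩ := hnhds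
    obtain ⟨n, hn⟩ := (hD.diff (hI.union (Set.finite_Iio m))).nonempty
    have hnD : n ∈ D := hn.1
    have hnI : n ∉ I := fun h' => hn.2 (Or.inl h')
    have hmn : m ≤ n := by
      by_contra h'
      exact hn.2 (Or.inr (by simpa using Nat.lt_of_not_le h'))
    set c : S n := π n fun k => f k with hc
    set y : S n := if (c : ℕ) = 0 then ⟨1, (hmem n).2⟩ else ⟨0, (hmem n).1⟩ with hy
    have hyc : y ≠ c := by
      intro h'
      by_cases h0 : (c : ℕ) = 0
      · rw [hy, if_pos h0] at h'
        have : (1 : ℕ) = (c : ℕ) := congrArg Subtype.val h'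
        omega
      · rw [hy, if_neg h0] at h'
        exact h0 ((congrArg Subtype.val h').symm)
    set g : ∀ k, S k := Function.update f n y with hg
    have hgI : g ∈ Set.pi I t := by
      intro i hi
      have : g i = f i := Function.update_of_ne (fun h' : i = n => hnI (h' ▸ hi)) _ _
      rw [this]
      exact mem_of_mem_nhds (ht i)
    have hgA : g ∈ A m := hsub' hgI
    have heq : g n = π n fun k => g k := hgA n hnD hmn
    have hgn : g n = y := Function.update_self _ _ _
    have hgk : (fun k : Fin n => g k) = fun k : Fin n => f k := by
      funext k
      exact Function.update_of_ne (fun h' : (k : ℕ) = n => by have := k.isLt; omega) _ _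
    rw [hgn, hgk] at heq
    exact hyc heq
  rw [isMeagre_iff_countable_union_isNowhereDense]
  exact ⟨{A m}, by simpa using hclosed.isNowhereDense_iff.2 hint,
    Set.countable_singleton _, by simp⟩
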